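/- Let d ≥ 2 and suppose ℂ^d admits a family of d+1 mutually unbiased orthonormal bases with projections Π_{nk}, n = 1,…,d+1, k = 1,…,d. Then for every density matrix ρ on ℂ^d, the probabilities p_{nk} = tr(Π_{nk} ρ) satisfy the equality Σ_{n=1}^{d+1} Σ_{k=1}^{d} p_{nk}² = tr(ρ²) + 1. -/

import Mathlib

open scoped BigOperators ComplexOrder

/-- Rank-one orthogonal projection `|v⟩⟨v|` onto a vector `v ∈ ℂ^d`, as a matrix. -/
noncomputable def proj {d : ℕ} (v : EuclideanSpace ℂ (Fin d)) : Matrix (Fin d) (Fin d) ℂ :=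
  Matrix.of fun i j => v i * star (v j)

/-- A family of orthonormal bases of `ℂ^d` is mutually unbiased if
`|⟨e n k, e m l⟩|² = 1/d` for all `n ≠ m` and all `k, l`. -/
def MutuallyUnbiased {d N : ℕ} (e : Fin N → Fin d → EuclideanSpace ℂ (Fin d)) : Prop :=
  ∀ n m : Fin N, n ≠ m → ∀ k l : Fin d,
    ‖(inner ℂ (e n k) (e m l) : ℂ)‖ ^ 2 = 1 / d

lemma proj_trace_mul {d : ℕ} (v w : EuclideanSpace ℂ (Fin d)) :
    (proj v * proj w).trace = (inner ℂ v w : ℂ) * (inner ℂ w v : ℂ) := by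
  simp only [Matrix.trace, Matrix.diag, Matrix.mul_apply, proj, Matrix.of_apply,
    PiLp.inner_apply, RCLike.inner_apply, starRingEnd_apply]
  rw [Finset.sum_comm, Finset.sum_mul_sum]
  congr 1; ext j; congr 1; ext i; ring

lemma proj_trace {d : ℕ} (v : EuclideanSpace ℂ (Fin d)) : (proj v).trace = (inner ℂ v v : ℂ) := by
  simp only [Matrix.trace, Matrix.diag, proj, Matrix.of_apply, PiLp.inner_apply,
    RCLike.inner_apply, starRingEnd_apply]

lemma proj_conjTranspose {d : ℕ} (v : EuclideanSpace ℂ (Fin d)) :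
    (proj v).conjTranspose = proj v := by
  ext i j
  simp [proj, Matrix.conjTranspose_apply, mul_comm]

lemma sum_proj {d : ℕ} (v : Fin d → EuclideanSpace ℂ (Fin d)) (h : Orthonormal ℂ v) :
    ∑ k, proj (v k) = 1 := by
  set M : Matrix (Fin d) (Fin d) ℂ := Matrix.of (fun k i => star (v k i)) with hM
  have h1 : M * M.conjTranspose = 1 := by
    ext k l
    have hkl := (orthonormal_iff_ite.mp h) k l
    simp only [PiLp.inner_apply, RCLike.inner_apply, starRingEnd_apply] at hkl
    simp only [Matrix.mul_apply, Matrix.conjTranspose_apply, hM, Matrix.of_apply, star_star,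
      Matrix.one_apply]
    rw [← hkl]; exact Finset.sum_congr rfl fun j _ => mul_comm _ _
  have h2 : M.conjTranspose * M = 1 := mul_eq_one_comm.mp h1
  ext i j
  have := congrFun (congrFun h2 i) j
  simp only [Matrix.mul_apply, Matrix.conjTranspose_apply, hM, Matrix.of_apply, star_star] at this
  simpa [Matrix.sum_apply, proj] using this

theorem stmt_4 (d : ℕ) (hd : 2 ≤ d)
    (e : Fin (d + 1) → Fin d → EuclideanSpace ℂ (Fin d))
    (horth : ∀ n, Orthonormal ℂ (e n))
    (hmub : MutuallyUnbiased e)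
    (ρ : Matrix (Fin d) (Fin d) ℂ) (hpsd : ρ.PosSemidef) (htr : ρ.trace = 1)
    (p : Fin (d + 1) → Fin d → ℝ)
    (hp : ∀ n k, p n k = ((proj (e n k) * ρ).trace).re) :
    ∑ n : Fin (d + 1), ∑ k : Fin d, (p n k) ^ 2 = ((ρ * ρ).trace).re + 1 := by
  classical
  haveI : NeZero d := ⟨by omega⟩
  have hdne : (d : ℂ) ≠ 0 := Nat.cast_ne_zero.mpr (by omega)
  set a : ℂ := (d : ℂ)⁻¹ with ha
  have had : a * (d : ℂ) = 1 := inv_mul_cancel₀ hdne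
  have haad : a * a * (d : ℂ) = a := by rw [ha]; field_simp
  set P : Fin (d+1) → Fin d → Matrix (Fin d) (Fin d) ℂ := fun n k => proj (e n k) with hP
  set Q : Fin (d+1) → Fin d → Matrix (Fin d) (Fin d) ℂ := fun n k => P n k - a • 1 with hQdef
  set σ : Matrix (Fin d) (Fin d) ℂ := ρ - a • 1 with hσdef
  have hone : (1 : Matrix (Fin d) (Fin d) ℂ).trace = (d : ℂ) := by
    simp [Matrix.trace_one]
  have hPtr : ∀ n k, (P n k).trace = 1 := by
    intro n k
    rw [hP, proj_trace]
    simpa using (orthonormal_iff_ite.mp (horth n)) k k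
  -- Gram matrix of the projections
  have hPgram : ∀ n m k l, (P n k * P m l).trace =
      if n = m then (if k = l then (1:ℂ) else 0) else a := by
    intro n m k l
    rw [hP, proj_trace_mul]
    by_cases hnm : n = m
    · subst hnm
      rw [(orthonormal_iff_ite.mp (horth n)) k l, (orthonormal_iff_ite.mp (horth n)) l k]
      by_cases hkl : k = l <;> simp [hkl, eq_comm]
    · have h := hmub n m hnm k l
      have h2 : (inner ℂ (e m l) (e n k) : ℂ) = (starRingEnd ℂ) (inner ℂ (e n k) (e m l) : ℂ) :=
        (inner_conj_symm _ _).symm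
      rw [h2, Complex.mul_conj, if_neg hnm]
      rw [Complex.sq_norm] at h
      rw [h, ha]
      push_cast
      rw [one_div]
  -- generic expansion of traces
  have expand : ∀ A B : Matrix (Fin d) (Fin d) ℂ,
      ((A - a • 1) * (B - a • 1)).trace
        = (A * B).trace - a * A.trace - a * B.trace + a * a * (d : ℂ) := by
    intro A B
    simp only [sub_mul, mul_sub, Matrix.smul_mul, Matrix.mul_smul, one_mul, mul_one,
      Matrix.trace_sub, Matrix.trace_smul, smul_eq_mul, smul_smul, hone]
    ring
  have hQgram : ∀ n m k l, (Q n k * Q m l).trace =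
      if n = m then (if k = l then (1:ℂ) else 0) - a else 0 := by
    intro n m k l
    rw [hQdef]
    simp only
    rw [expand, hPgram, hPtr, hPtr, haad]
    by_cases hnm : n = m <;> simp [hnm]
  have hQσtr : ∀ n k, (Q n k * σ).trace = (P n k * ρ).trace - a := by
    intro n k
    rw [hQdef, hσdef]
    simp only
    rw [expand, hPtr, htr, haad]
    ring
  have hσσtr : (σ * σ).trace = (ρ * ρ).trace - a := by
    rw [hσdef]
    rw [expand, htr, haad]
    ring
  have hPsum : ∀ n, ∑ k, P n k = 1 := fun n => sum_proj (e n) (horth n)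
  have hQsum : ∀ n, ∑ k, Q n k = 0 := by
    intro n
    rw [hQdef]
    simp only [Finset.sum_sub_distrib, hPsum n, Finset.sum_const, Finset.card_univ,
      Fintype.card_fin]
    rw [sub_eq_zero, ← Nat.cast_smul_eq_nsmul ℂ, smul_smul, mul_comm (d:ℂ) a, had, one_smul]
  have hQtrace : ∀ n k, (Q n k).trace = 0 := by
    intro n k
    rw [hQdef]
    simp only [Matrix.trace_sub, Matrix.trace_smul, hone, hPtr, smul_eq_mul, had, sub_self]
  have hσtrace : σ.trace = 0 := by
    rw [hσdef]
    simp only [Matrix.trace_sub, Matrix.trace_smul, hone, htr, smul_eq_mul, had, sub_self]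
  -- the traceless subspace
  set V := LinearMap.ker (Matrix.traceLinearMap (Fin d) ℂ ℂ) with hV
  have hmemV : ∀ (A : Matrix (Fin d) (Fin d) ℂ), A.trace = 0 → A ∈ V := by
    intro A hA
    simpa [hV, LinearMap.mem_ker] using hA
  have hrankV : Module.finrank ℂ V = d * d - 1 := by
    have hsurj : Function.Surjective (Matrix.traceLinearMap (Fin d) ℂ ℂ) := by
      intro x
      refine ⟨Matrix.single 0 0 x, ?_⟩
      simp [Matrix.traceLinearMap, Matrix.trace_single_eq_same]
    have h1 := LinearMap.finrank_range_add_finrank_ker (Matrix.traceLinearMap (Fin d) ℂ ℂ)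
    rw [LinearMap.range_eq_top.mpr hsurj] at h1
    simp only [finrank_top, Module.finrank_self] at h1
    have h2 : Module.finrank ℂ (Matrix (Fin d) (Fin d) ℂ) = d * d := by
      simp [Module.finrank_matrix]
    rw [hV]
    omega
  have hcard : Fintype.card (Fin (d+1) × {k : Fin d // k ≠ 0}) = d * d - 1 := by
    have h1 : Fintype.card {k : Fin d // k ≠ 0} = d - 1 := by
      simp [Fintype.card_subtype_compl]
    rw [Fintype.card_prod, h1, Fintype.card_fin]
    obtain ⟨m, hm⟩ : ∃ m, d = m + 1 := ⟨d - 1, by omega⟩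
    rw [hm]
    simp only [Nat.add_sub_cancel]
    have : (m+1)*(m+1) = (m+1+1)*m + 1 := by ring
    omega
  set B : (Fin (d+1) × {k : Fin d // k ≠ 0}) → V :=
    fun j => ⟨Q j.1 j.2.1, hmemV _ (hQtrace j.1 j.2.1)⟩ with hB
  have hindep : LinearIndependent ℂ B := by
    rw [Fintype.linearIndependent_iff]
    intro c hc
    have hc' : ∑ j : Fin (d+1) × {k : Fin d // k ≠ 0}, c j • Q j.1 j.2.1 = 0 := by
      have h := congrArg (fun x : V => (x : Matrix (Fin d) (Fin d) ℂ)) hc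
      simpa [hB] using h
    have hkey : ∀ (m : Fin (d+1)) (l : {k : Fin d // k ≠ 0}),
        c (m, l) = a * ∑ k : {k : Fin d // k ≠ 0}, c (m, k) := by
      intro m l
      have h0 := congrArg (fun M => (M * Q m l.1).trace) hc'
      simp only [Finset.sum_mul, Matrix.zero_mul, Matrix.trace_zero, Matrix.trace_sum,
        Matrix.smul_mul, Matrix.trace_smul, smul_eq_mul] at h0
      rw [Fintype.sum_prod_type] at h0
      simp only [hQgram, mul_ite, mul_zero, Finset.sum_ite_irrel, Finset.sum_const_zero,
        Finset.sum_ite_eq', Finset.mem_univ, if_true] at h0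
      -- h0 : ∑ k, c (m,k) * ((if k.1 = l.1 then 1 else 0) - a) = 0
      have h1 : ∑ k : {k : Fin d // k ≠ 0}, c (m, k) * ((if (k:Fin d) = (l:Fin d) then (1:ℂ) else 0) - a)
          = c (m, l) - (∑ k : {k : Fin d // k ≠ 0}, c (m, k)) * a := by
        rw [Finset.sum_congr rfl (fun k _ => by rw [mul_sub, mul_ite, mul_one, mul_zero] :
          ∀ k ∈ Finset.univ, c (m, k) * ((if (k:Fin d) = (l:Fin d) then (1:ℂ) else 0) - a)
            = (if (k:Fin d) = (l:Fin d) then c (m,k) else 0) - c (m, k) * a)]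
        rw [Finset.sum_sub_distrib, ← Finset.sum_mul]
        congr 1
        have : ∀ k : {k : Fin d // k ≠ 0}, ((k:Fin d) = (l:Fin d)) = (k = l) := by
          intro k
          simp [Subtype.ext_iff]
        simp only [this]
        simp [Finset.sum_ite_eq']
      rw [h1] at h0
      linear_combination h0
    -- sum of coefficients vanishes
    have hS : ∀ m : Fin (d+1), ∑ k : {k : Fin d // k ≠ 0}, c (m, k) = 0 := by
      intro m
      set S := ∑ k : {k : Fin d // k ≠ 0}, c (m, k) with hSdef
      have h2 : S = ((d - 1 : ℕ) : ℂ) * (a * S) := by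
        conv_lhs => rw [hSdef, Finset.sum_congr rfl (fun l _ => hkey m l)]
        rw [Finset.sum_const, Finset.card_univ]
        rw [show Fintype.card {k : Fin d // k ≠ 0} = d - 1 by simp [Fintype.card_subtype_compl]]
        rw [nsmul_eq_mul]
      have hcast : ((d - 1 : ℕ) : ℂ) = (d : ℂ) - 1 := by
        push_cast [Nat.cast_sub (by omega : 1 ≤ d)]
        ring
      rw [hcast] at h2
      have h3 : S * (1 - ((d:ℂ) - 1) * a) = 0 := by
        linear_combination h2
      have h4 : (1 : ℂ) - ((d:ℂ) - 1) * a = a := by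
        linear_combination (-1 : ℂ) * had
      rw [h4] at h3
      rcases mul_eq_zero.mp h3 with h5 | h5
      · exact h5
      · exact absurd h5 (by rw [ha]; exact inv_ne_zero hdne)
    intro j
    obtain ⟨m, l⟩ := j
    rw [hkey m l, hS m, mul_zero]
  -- build a basis of the traceless subspace from the Q's
  haveI : Nonempty {k : Fin d // k ≠ 0} :=
    ⟨⟨⟨1, by omega⟩, by simp [Fin.ext_iff]⟩⟩
  have hcard' : Fintype.card (Fin (d+1) × {k : Fin d // k ≠ 0}) = Module.finrank ℂ V := by
    rw [hcard, hrankV]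
  let b : Module.Basis (Fin (d+1) × {k : Fin d // k ≠ 0}) ℂ V :=
    basisOfLinearIndependentOfCardEqFinrank hindep hcard'
  have hbB : ⇑b = B := coe_basisOfLinearIndependentOfCardEqFinrank hindep hcard'
  set s : V := ⟨σ, hmemV σ hσtrace⟩ with hs
  have hrepr := b.sum_repr s
  rw [hbB] at hrepr
  set c : (Fin (d+1) × {k : Fin d // k ≠ 0}) → ℂ := fun j => b.repr s j with hcdef
  have hσsum : σ = ∑ j : Fin (d+1) × {k : Fin d // k ≠ 0}, c j • Q j.1 j.2.1 := by
    have h := congrArg (fun x : V => (x : Matrix (Fin d) (Fin d) ℂ)) hrepr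
    simp only [hB] at h
    simpa [hs, hB, hcdef] using h.symm
  -- the frame operator fixes each Q
  have hTQ : ∀ (m : Fin (d+1)) (l : Fin d),
      (∑ n, ∑ k, (Q n k * Q m l).trace • Q n k) = Q m l := by
    intro m l
    have step : ∀ n, (∑ k, (Q n k * Q m l).trace • Q n k)
        = if n = m then Q m l else 0 := by
      intro n
      by_cases hnm : n = m
      · subst hnm
        simp only [hQgram, eq_self_iff_true, if_true]
        rw [Finset.sum_congr rfl (fun k _ => sub_smul ((if k = l then (1:ℂ) else 0)) a (Q n k)),
          Finset.sum_sub_distrib]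
        rw [← Finset.smul_sum, hQsum n, smul_zero, sub_zero]
        simp only [ite_smul, one_smul, zero_smul]
        rw [Finset.sum_ite_eq' Finset.univ l (fun k => Q n k)]
        simp
      · simp [hQgram, hnm]
    rw [Finset.sum_congr rfl (fun n _ => step n)]
    rw [Finset.sum_ite_eq' Finset.univ m (fun _ => Q m l)]
    simp
  -- hence it fixes σ
  have hTσ : (∑ n, ∑ k, (Q n k * σ).trace • Q n k) = σ := by
    have hQσ : ∀ n k, (Q n k * σ).trace
        = ∑ j : Fin (d+1) × {k : Fin d // k ≠ 0}, c j * (Q n k * Q j.1 j.2.1).trace := by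
      intro n k
      conv_lhs => rw [hσsum]
      rw [Finset.mul_sum, Matrix.trace_sum]
      exact Finset.sum_congr rfl fun j _ => by rw [Matrix.mul_smul, Matrix.trace_smul, smul_eq_mul]
    calc (∑ n, ∑ k, (Q n k * σ).trace • Q n k)
        = ∑ n, ∑ k, ∑ j : Fin (d+1) × {k : Fin d // k ≠ 0},
            c j • ((Q n k * Q j.1 j.2.1).trace • Q n k) := by
          refine Finset.sum_congr rfl fun n _ => Finset.sum_congr rfl fun k _ => ?_
          rw [hQσ n k, Finset.sum_smul]
          exact Finset.sum_congr rfl fun j _ => by rw [smul_smul]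
      _ = ∑ j : Fin (d+1) × {k : Fin d // k ≠ 0},
            ∑ n, ∑ k, c j • ((Q n k * Q j.1 j.2.1).trace • Q n k) := by
          rw [Finset.sum_congr rfl (fun n _ => Finset.sum_comm)]
          exact Finset.sum_comm
      _ = ∑ j : Fin (d+1) × {k : Fin d // k ≠ 0},
            c j • (∑ n, ∑ k, (Q n k * Q j.1 j.2.1).trace • Q n k) := by
          refine Finset.sum_congr rfl fun j _ => ?_
          rw [Finset.smul_sum]
          exact Finset.sum_congr rfl fun n _ => (Finset.smul_sum).symm
      _ = ∑ j : Fin (d+1) × {k : Fin d // k ≠ 0}, c j • Q j.1 j.2.1 := by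
          exact Finset.sum_congr rfl fun j _ => by rw [hTQ]
      _ = σ := hσsum.symm
  -- the key quadratic identity
  have hkeyq : ∑ n, ∑ k, (Q n k * σ).trace * (Q n k * σ).trace = (σ * σ).trace := by
    calc ∑ n, ∑ k, (Q n k * σ).trace * (Q n k * σ).trace
        = ((∑ n, ∑ k, (Q n k * σ).trace • Q n k) * σ).trace := by
          simp only [Finset.sum_mul, Matrix.trace_sum, Matrix.smul_mul, Matrix.trace_smul,
            smul_eq_mul]
      _ = (σ * σ).trace := by rw [hTσ]
  -- final arithmetic
  set g : Fin (d+1) → Fin d → ℂ := fun n k => (P n k * ρ).trace with hgdef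
  have hgsum : ∑ n, ∑ k, g n k = (d : ℂ) + 1 := by
    have h1 : ∀ n, ∑ k, g n k = 1 := by
      intro n
      rw [hgdef]
      simp only
      rw [← Matrix.trace_sum, ← Finset.sum_mul, hPsum n, Matrix.one_mul, htr]
    rw [Finset.sum_congr rfl (fun n _ => h1 n), Finset.sum_const, Finset.card_univ,
      Fintype.card_fin, nsmul_eq_mul, mul_one]
    push_cast
    ring
  have hkey2 : ∑ n, ∑ k, g n k * g n k = (ρ * ρ).trace + 1 := by
    have h := hkeyq
    rw [hσσtr] at h
    rw [Finset.sum_congr rfl (fun n _ => Finset.sum_congr rfl (fun k _ => by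
        rw [hQσtr n k] :
      ∀ k ∈ Finset.univ, (Q n k * σ).trace * (Q n k * σ).trace = (g n k - a) * (g n k - a)))] at h
    have hexp : ∑ n, ∑ k, (g n k - a) * (g n k - a)
        = (∑ n, ∑ k, g n k * g n k) - 2 * a * (∑ n, ∑ k, g n k)
          + ((d:ℂ)+1) * ((d:ℂ) * (a * a)) := by
      rw [Finset.sum_congr rfl (fun n _ => Finset.sum_congr rfl (fun k _ => by ring :
        ∀ k ∈ Finset.univ, (g n k - a) * (g n k - a)
          = g n k * g n k - 2 * a * g n k + a * a))]
      simp only [Finset.sum_add_distrib, Finset.sum_sub_distrib, ← Finset.mul_sum,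
        Finset.sum_const, Finset.card_univ, Fintype.card_fin, nsmul_eq_mul]
      push_cast
      ring
    rw [hexp, hgsum] at h
    linear_combination h - (a * (d:ℂ) + a - 1) * had
  have hgreal : ∀ n k, g n k = ((p n k : ℝ) : ℂ) := by
    intro n k
    have hPH : (P n k).conjTranspose = P n k := proj_conjTranspose (e n k)
    have hstar : star (g n k) = g n k := by
      rw [hgdef]
      simp only
      rw [← Matrix.trace_conjTranspose, Matrix.conjTranspose_mul, hpsd.1, hPH,
        Matrix.trace_mul_comm]
    have h2 : ((g n k).re : ℂ) = g n k := Complex.conj_eq_iff_re.mp hstar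
    rw [hp n k]
    exact h2.symm
  have hfinal : ((∑ n : Fin (d+1), ∑ k : Fin d, (p n k)^2 : ℝ) : ℂ) = (ρ * ρ).trace + 1 := by
    rw [← hkey2]
    push_cast
    exact Finset.sum_congr rfl fun n _ => Finset.sum_congr rfl fun k _ => by
      rw [hgreal n k]
      push_cast
      ring
  have hre := congrArg Complex.re hfinal
  simpa [← Complex.ofReal_pow] using hre
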